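/- Let (h_n) be a regular sequence of functions on [0,1] and define g_n := ((4/3)^{2n}·h_{2n} + (4/3)^{2n+1}·h_{2n+1})/2 for n ∈ ℕ. Then (g_n) is a regular sequence (indeed ∫₀¹ g_n < (5/6)·(4/9)^n ≤ 2^{-n}), and for every x ∈ [0,1] and γ ∈ ℝ such that ∑_{n=0}^m g_n(x) ≤ γ for all m ∈ ℕ, one has h_n(x) ≤ 2γ·(3/4)^n for all n ∈ ℕ. -/
import Mathlib


open MeasureTheory Filter Set

noncomputable section

/-- A sequence of functions on `[0,1]` is *regular* if each member is continuous and
nonnegative on `[0,1]` and has integral over `[0,1]` strictly less than `2⁻ⁿ`. -/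
def RegularSeq (h : ℕ → ℝ → ℝ) : Prop :=
  ∀ n : ℕ, ContinuousOn (h n) (Set.Icc 0 1) ∧
    (∀ x ∈ Set.Icc (0:ℝ) 1, 0 ≤ h n x) ∧
    (∫ x in (0:ℝ)..1, h n x) < (1/2 : ℝ) ^ n

/-- The set `Ω(𝔥)` of points of `[0,1]` at which the partial sums of `∑ hₙ(x)` are
bounded above. -/
def Omega (h : ℕ → ℝ → ℝ) : Set ℝ :=
  {x ∈ Set.Icc (0:ℝ) 1 | ∃ γ : ℝ, ∀ m : ℕ, ∑ n ∈ Finset.range (m+1), h n x ≤ γ}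

/-- A subset `X ⊆ [0,1]` is *almost full* if `Ω(𝔥) ⊆ X` for some regular sequence `𝔥`. -/
def AlmostFull (X : Set ℝ) : Prop :=
  ∃ h : ℕ → ℝ → ℝ, RegularSeq h ∧ Omega h ⊆ X

/-- With `gₙ = ((4/3)^{2n} h_{2n} + (4/3)^{2n+1} h_{2n+1})/2`, the sequence `(gₙ)` is
regular (indeed `∫₀¹ gₙ < (5/6)·(4/9)ⁿ`); and whenever the partial sums of `∑ gₙ(x)`
are bounded by `γ`, one has `hₙ(x) ≤ 2γ·(3/4)ⁿ` for all `n`. -/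
theorem stmt7 (h : ℕ → ℝ → ℝ) (hreg : RegularSeq h)
    (g : ℕ → ℝ → ℝ)
    (hg : ∀ n x, g n x = ((4/3 : ℝ)^(2*n) * h (2*n) x + (4/3 : ℝ)^(2*n+1) * h (2*n+1) x) / 2) :
    RegularSeq g ∧
    (∀ n : ℕ, (∫ x in (0:ℝ)..1, g n x) < (5/6 : ℝ) * (4/9 : ℝ)^n ∧
      (5/6 : ℝ) * (4/9 : ℝ)^n ≤ (1/2 : ℝ)^n) ∧
    (∀ x ∈ Set.Icc (0:ℝ) 1, ∀ γ : ℝ,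
      (∀ m : ℕ, ∑ n ∈ Finset.range (m+1), g n x ≤ γ) →
      ∀ n : ℕ, h n x ≤ 2 * γ * (3/4 : ℝ)^n) := by
  -- integrability of each h n
  have hint : ∀ n : ℕ, IntervalIntegrable (h n) MeasureTheory.volume 0 1 := by
    intro n
    apply ContinuousOn.intervalIntegrable
    rw [Set.uIcc_of_le (by norm_num : (0:ℝ) ≤ 1)]
    exact (hreg n).1
  -- integral computation
  have hIg : ∀ n : ℕ, (∫ x in (0:ℝ)..1, g n x) =
      ((4/3 : ℝ)^(2*n) * (∫ x in (0:ℝ)..1, h (2*n) x)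
        + (4/3 : ℝ)^(2*n+1) * (∫ x in (0:ℝ)..1, h (2*n+1) x)) / 2 := by
    intro n
    have : (∫ x in (0:ℝ)..1, g n x)
        = ∫ x in (0:ℝ)..1,
            ((4/3 : ℝ)^(2*n) * h (2*n) x + (4/3 : ℝ)^(2*n+1) * h (2*n+1) x) / 2 := by
      apply intervalIntegral.integral_congr
      intro x _
      exact hg n x
    rw [this, intervalIntegral.integral_div,
      intervalIntegral.integral_add ((hint (2*n)).const_mul _) ((hint (2*n+1)).const_mul _),
      intervalIntegral.integral_const_mul, intervalIntegral.integral_const_mul]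
  have hbound : ∀ n : ℕ, (∫ x in (0:ℝ)..1, g n x) < (5/6 : ℝ) * (4/9 : ℝ)^n := by
    intro n
    rw [hIg n]
    have h1 := (hreg (2*n)).2.2
    have h2 := (hreg (2*n+1)).2.2
    have c1 : (0:ℝ) < (4/3 : ℝ)^(2*n) := by positivity
    have c2 : (0:ℝ) < (4/3 : ℝ)^(2*n+1) := by positivity
    have m1 := mul_lt_mul_of_pos_left h1 c1
    have m2 := mul_lt_mul_of_pos_left h2 c2
    have e1 : (4/3 : ℝ)^(2*n) * (1/2 : ℝ)^(2*n) = (4/9 : ℝ)^n := by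
      rw [← mul_pow, pow_mul]; norm_num
    have e2 : (4/3 : ℝ)^(2*n+1) * (1/2 : ℝ)^(2*n+1) = (2/3 : ℝ) * (4/9 : ℝ)^n := by
      have : ((4:ℝ)/3) * (1/2) = 2/3 := by norm_num
      rw [← mul_pow, this, pow_succ, pow_mul]
      norm_num
      ring
    rw [e1] at m1; rw [e2] at m2
    linarith
  have hbound2 : ∀ n : ℕ, (5/6 : ℝ) * (4/9 : ℝ)^n ≤ (1/2 : ℝ)^n := by
    intro n
    have h89 : ((8:ℝ)/9)^n ≤ 1 := pow_le_one₀ (by norm_num) (by norm_num)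
    have e : (4/9 : ℝ)^n = (8/9 : ℝ)^n * (1/2 : ℝ)^n := by
      rw [← mul_pow]; norm_num
    have hp : (0:ℝ) ≤ (1/2 : ℝ)^n := by positivity
    rw [e]
    nlinarith
  refine ⟨?_, fun n => ⟨hbound n, hbound2 n⟩, ?_⟩
  · intro n
    refine ⟨?_, ?_, lt_of_lt_of_le (hbound n) (hbound2 n)⟩
    · have : ContinuousOn (fun x => ((4/3 : ℝ)^(2*n) * h (2*n) x
          + (4/3 : ℝ)^(2*n+1) * h (2*n+1) x) / 2) (Set.Icc 0 1) :=
        ((continuousOn_const.mul (hreg (2*n)).1).add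
          (continuousOn_const.mul (hreg (2*n+1)).1)).div_const _
      exact this.congr (fun x _ => hg n x)
    · intro x hx
      rw [hg n x]
      have := (hreg (2*n)).2.1 x hx
      have := (hreg (2*n+1)).2.1 x hx
      positivity
  · intro x hx γ hγ n
    have gnn : ∀ k, 0 ≤ g k x := by
      intro k
      rw [hg k x]
      have := (hreg (2*k)).2.1 x hx
      have := (hreg (2*k+1)).2.1 x hx
      positivity
    have hgle : ∀ k, g k x ≤ γ := fun k =>
      le_trans (Finset.single_le_sum (fun i _ => gnn i) (Finset.self_mem_range_succ k)) (hγ k)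
    have key : (4/3 : ℝ)^n * h n x ≤ 2 * γ := by
      rcases Nat.even_or_odd n with ⟨k, hk⟩ | ⟨k, hk⟩
      · have hk' : n = 2*k := by omega
        subst hk'
        have hle := hgle k
        rw [hg k x] at hle
        have hnn := (hreg (2*k+1)).2.1 x hx
        have c2 : (0:ℝ) ≤ (4/3 : ℝ)^(2*k+1) := by positivity
        nlinarith
      · have hk' : n = 2*k+1 := by omega
        subst hk'
        have hle := hgle k
        rw [hg k x] at hle
        have hnn := (hreg (2*k)).2.1 x hx
        have c1 : (0:ℝ) ≤ (4/3 : ℝ)^(2*k) := by positivity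
        nlinarith
    have e : (3/4 : ℝ)^n * (4/3 : ℝ)^n = 1 := by rw [← mul_pow]; norm_num
    have hp : (0:ℝ) ≤ (3/4 : ℝ)^n := by positivity
    calc h n x = (3/4 : ℝ)^n * ((4/3 : ℝ)^n * h n x) := by rw [← mul_assoc, e, one_mul]
      _ ≤ (3/4 : ℝ)^n * (2 * γ) := mul_le_mul_of_nonneg_left key hp
      _ = 2 * γ * (3/4 : ℝ)^n := by ring
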